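/- (Value of G_n(s)⁴ R_{ρ_{2n−1}}(s)² at s = 0.) Let n ∈ ℕ with n ≥ 1 and define Ψ_n(s) = ( 𝒵(2n−1)(s − n + 1/2) · 𝒵(−(2n+1))(s + n + 1/2) ) / ( 𝒵(2n+1)(s − n + 3/2) · 𝒵(−(2n−1))(s + n + 3/2) ), which on Re(s) > n + 3/2 agrees with G_n(s)² R_{ρ_{2n−1}}(s). Then the function s ↦ Ψ_n(s)², restricted to the set of s where 𝒵(2n+1)(s − n + 3/2) ≠ 0 and 𝒵(−(2n−1))(s + n + 3/2) ≠ 0, tends to exp( −(2/π)·(2n² − 1/6)·V − 2πi·(η(2n+1) − η(2n−1)) ) as s → 0 within that set. -/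

import Mathlib

/-- `R(σ_k, s) = ∏_{i ∈ I} (1 − e^{i(k/2)θ_i} e^{−s ℓ_i})`. -/
noncomputable def Rz {I : Type*} (ℓ θ : I → ℝ) (k : ℤ) (s : ℂ) : ℂ :=
  ∏' i : I, (1 - Complex.exp (Complex.I * ((k : ℂ) / 2) * (θ i : ℂ))
    * Complex.exp (-s * (ℓ i : ℂ)))

/-- Selberg zeta function
`Z(σ_k, s) = ∏_{i ∈ I} ∏_{p,q ≥ 0} (1 − e^{i(k/2)θ_i} e^{−p(ℓ_i+iθ_i)} e^{−q(ℓ_i−iθ_i)} e^{−s ℓ_i})`. -/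
noncomputable def Zs {I : Type*} (ℓ θ : I → ℝ) (k : ℤ) (s : ℂ) : ℂ :=
  ∏' x : I × ℕ × ℕ,
    (1 - Complex.exp (Complex.I * ((k : ℂ) / 2) * (θ x.1 : ℂ))
       * Complex.exp (-(x.2.1 : ℂ) * ((ℓ x.1 : ℂ) + Complex.I * (θ x.1 : ℂ)))
       * Complex.exp (-(x.2.2 : ℂ) * ((ℓ x.1 : ℂ) - Complex.I * (θ x.1 : ℂ)))
       * Complex.exp (-s * (ℓ x.1 : ℂ)))

open Filter Topology

lemma aux_exp_ratio_sq (a b c d : ℂ) :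
    ((Complex.exp a * Complex.exp b) / (Complex.exp c * Complex.exp d)) ^ 2 =
      Complex.exp (2 * (a + b - c - d)) := by
  rw [← Complex.exp_add, ← Complex.exp_add, ← Complex.exp_sub, sq, ← Complex.exp_add]
  congr 1; ring

lemma aux_ratio (f : ℂ → ℂ) (hf : Differentiable ℂ f) (S : Set ℂ)
    (hS : ∀ s ∈ S, f s ≠ 0) :
    Filter.Tendsto (fun s => (f (-s) / f s) ^ 2) (nhdsWithin 0 S) (nhds 1) := by
  have hneg : Filter.Tendsto (fun s : ℂ => -s) (nhdsWithin 0 S) (nhds 0) :=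
    by simpa using (continuous_neg.tendsto (0 : ℂ)).mono_left nhdsWithin_le_nhds
  by_cases h0 : f 0 = 0
  · by_cases htop : ∀ᶠ z in nhds (0 : ℂ), f z = 0
    · have h1 : ∀ᶠ s in nhdsWithin (0:ℂ) S, f s = 0 := nhdsWithin_le_nhds htop
      have h2 : ∀ᶠ s in nhdsWithin (0:ℂ) S, f s ≠ 0 := eventually_nhdsWithin_of_forall hS
      have hbot : nhdsWithin (0:ℂ) S = ⊥ :=
        Filter.eventually_false_iff_eq_bot.mp ((h1.and h2).mono fun s hs => hs.2 hs.1)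
      rw [hbot]; exact tendsto_bot
    · have ha : AnalyticAt ℂ f 0 := hf.analyticAt 0
      have hne : analyticOrderAt f 0 ≠ ⊤ := fun h => htop (analyticOrderAt_eq_top.mp h)
      obtain ⟨m, hm⟩ := WithTop.ne_top_iff_exists.mp hne
      obtain ⟨g, hg, hg0, hfg⟩ := (ha.analyticOrderAt_eq_natCast (n := m)).mp hm.symm
      have hfg1 : ∀ᶠ s in nhdsWithin (0:ℂ) S, f s = (s - 0) ^ m • g s :=
        nhdsWithin_le_nhds hfg
      have hfg2 : ∀ᶠ s in nhdsWithin (0:ℂ) S, f (-s) = (-s - 0) ^ m • g (-s) :=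
        hneg.eventually hfg
      have hsz : ∀ᶠ s in nhdsWithin (0:ℂ) S, s ≠ 0 :=
        eventually_nhdsWithin_of_forall fun s hs h => (hS s hs) (h ▸ h0)
      have hev : ∀ᶠ s in nhdsWithin (0:ℂ) S,
          (f (-s) / f s) ^ 2 = (g (-s) / g s) ^ 2 := by
        filter_upwards [hfg1, hfg2, hsz] with s e1 e2 hs
        rw [e1, e2, sub_zero, sub_zero, smul_eq_mul, smul_eq_mul]
        have hsm : ((s : ℂ) ^ m) ^ 2 ≠ 0 := pow_ne_zero _ (pow_ne_zero _ hs)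
        have hpow : ((-s) ^ m) ^ 2 = ((s : ℂ) ^ m) ^ 2 := by
          rw [← pow_mul, ← pow_mul, mul_comm m 2, pow_mul, pow_mul, neg_sq]
        calc ((-s) ^ m * g (-s) / (s ^ m * g s)) ^ 2
            = (((-s) ^ m) ^ 2 * g (-s) ^ 2) / ((s ^ m) ^ 2 * g s ^ 2) := by ring
          _ = ((s ^ m) ^ 2 * g (-s) ^ 2) / ((s ^ m) ^ 2 * g s ^ 2) := by rw [hpow]
          _ = g (-s) ^ 2 / g s ^ 2 := mul_div_mul_left _ _ hsm
          _ = (g (-s) / g s) ^ 2 := (div_pow _ _ 2).symm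
      have t1 : Filter.Tendsto (fun s : ℂ => g (-s)) (nhdsWithin 0 S) (nhds (g 0)) :=
        hg.continuousAt.tendsto.comp hneg
      have t2 : Filter.Tendsto g (nhdsWithin (0:ℂ) S) (nhds (g 0)) :=
        hg.continuousAt.tendsto.mono_left nhdsWithin_le_nhds
      have hgc := (t1.div t2 hg0).pow 2
      rw [div_self hg0, one_pow] at hgc
      exact Filter.Tendsto.congr' (hev.mono fun s h => h.symm) hgc
  · have hc : Filter.Tendsto (fun s : ℂ => (f (-s) / f s) ^ 2) (nhds 0)
        (nhds ((f (-0) / f 0) ^ 2)) := by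
      refine Filter.Tendsto.pow (Filter.Tendsto.div ?_ (hf.continuous.tendsto 0) h0) 2
      exact (hf.continuous.tendsto (-0)).comp (continuous_neg.tendsto (0:ℂ))
    rw [neg_zero, div_self h0, one_pow] at hc
    exact hc.mono_left nhdsWithin_le_nhds

/-- limit value of `G_n(s)⁴ R_{ρ_{2n−1}}(s)²` at `s = 0`, expressed through the
entire extensions `𝒵 k` of the Selberg zeta functions. -/
theorem statement13 {I : Type*} [Countable I] (ℓ θ : I → ℝ)
    (hℓ : ∀ i, 0 < ℓ i) (δ : ℝ) (hδ : δ < 2)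
    (hsum : Summable fun i => Real.exp (-δ * ℓ i))
    (V : ℝ) (hV : 0 < V) (η : ℤ → ℝ) (𝒵 : ℤ → ℂ → ℂ)
    (hentire : ∀ k : ℤ, Differentiable ℂ (𝒵 k))
    (hagree : ∀ (k : ℤ) (s : ℂ), 2 < s.re → 𝒵 k s = Zs ℓ θ k s)
    (hfe : ∀ (k : ℤ) (s : ℂ), 𝒵 k (1 + s) =
      Complex.exp (Complex.I * (Real.pi : ℂ) * (η k : ℂ)) *
      Complex.exp (((V : ℂ) / (Real.pi : ℂ)) * (s ^ 3 / 3 - (k : ℂ) ^ 2 * s / 4)) *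
      𝒵 (-k) (1 - s))
    (n : ℕ) (hn : 1 ≤ n) :
    Filter.Tendsto
      (fun s : ℂ =>
        ((𝒵 (2 * (n : ℤ) - 1) (s - (n : ℂ) + 1 / 2) *
            𝒵 (-(2 * (n : ℤ) + 1)) (s + (n : ℂ) + 1 / 2)) /
         (𝒵 (2 * (n : ℤ) + 1) (s - (n : ℂ) + 3 / 2) *
            𝒵 (-(2 * (n : ℤ) - 1)) (s + (n : ℂ) + 3 / 2))) ^ 2)
      (nhdsWithin 0 {s : ℂ | 𝒵 (2 * (n : ℤ) + 1) (s - (n : ℂ) + 3 / 2) ≠ 0 ∧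
        𝒵 (-(2 * (n : ℤ) - 1)) (s + (n : ℂ) + 3 / 2) ≠ 0})
      (nhds (Complex.exp
        (-(2 / (Real.pi : ℂ)) * (2 * (n : ℂ) ^ 2 - 1 / 6) * (V : ℂ) -
          2 * (Real.pi : ℂ) * Complex.I *
            ((η (2 * (n : ℤ) + 1) : ℂ) - (η (2 * (n : ℤ) - 1) : ℂ))))) := by
  have hπ : (Real.pi : ℂ) ≠ 0 := Complex.ofReal_ne_zero.mpr Real.pi_ne_zero
  have eq1 : ∀ s : ℂ, 𝒵 (2 * (n : ℤ) - 1) (s - (n : ℂ) + 1 / 2) =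
      Complex.exp (Complex.I * (Real.pi : ℂ) * ((η (2 * (n : ℤ) - 1) : ℝ) : ℂ)) *
      Complex.exp (((V : ℂ) / (Real.pi : ℂ)) *
        ((s - (n : ℂ) - 1 / 2) ^ 3 / 3 -
          ((2 * (n : ℤ) - 1 : ℤ) : ℂ) ^ 2 * (s - (n : ℂ) - 1 / 2) / 4)) *
      𝒵 (-(2 * (n : ℤ) - 1)) (-s + (n : ℂ) + 3 / 2) := by
    intro s
    have h := hfe (2 * (n : ℤ) - 1) (s - (n : ℂ) - 1 / 2)
    rw [show (1 : ℂ) + (s - (n : ℂ) - 1 / 2) = s - (n : ℂ) + 1 / 2 by ring,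
        show (1 : ℂ) - (s - (n : ℂ) - 1 / 2) = -s + (n : ℂ) + 3 / 2 by ring] at h
    exact h
  have eq2 : ∀ s : ℂ, 𝒵 (2 * (n : ℤ) + 1) (s - (n : ℂ) + 3 / 2) =
      Complex.exp (Complex.I * (Real.pi : ℂ) * ((η (2 * (n : ℤ) + 1) : ℝ) : ℂ)) *
      Complex.exp (((V : ℂ) / (Real.pi : ℂ)) *
        ((s - (n : ℂ) + 1 / 2) ^ 3 / 3 -
          ((2 * (n : ℤ) + 1 : ℤ) : ℂ) ^ 2 * (s - (n : ℂ) + 1 / 2) / 4)) *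
      𝒵 (-(2 * (n : ℤ) + 1)) (-s + (n : ℂ) + 1 / 2) := by
    intro s
    have h := hfe (2 * (n : ℤ) + 1) (s - (n : ℂ) + 1 / 2)
    rw [show (1 : ℂ) + (s - (n : ℂ) + 1 / 2) = s - (n : ℂ) + 3 / 2 by ring,
        show (1 : ℂ) - (s - (n : ℂ) + 1 / 2) = -s + (n : ℂ) + 1 / 2 by ring] at h
    exact h
  set S : Set ℂ := {s : ℂ | 𝒵 (2 * (n : ℤ) + 1) (s - (n : ℂ) + 3 / 2) ≠ 0 ∧
      𝒵 (-(2 * (n : ℤ) - 1)) (s + (n : ℂ) + 3 / 2) ≠ 0} with hSdef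
  have hd1 : Differentiable ℂ (fun t : ℂ => 𝒵 (-(2 * (n : ℤ) - 1)) (t + (n : ℂ) + 3 / 2)) :=
    (hentire _).comp ((differentiable_id.add_const _).add_const _)
  have T2 : Filter.Tendsto (fun s : ℂ =>
      (𝒵 (-(2 * (n : ℤ) - 1)) (-s + (n : ℂ) + 3 / 2) /
        𝒵 (-(2 * (n : ℤ) - 1)) (s + (n : ℂ) + 3 / 2)) ^ 2) (nhdsWithin 0 S) (nhds 1) :=
    aux_ratio _ hd1 S fun s hs => hs.2
  have hd2 : Differentiable ℂ (fun t : ℂ => 𝒵 (-(2 * (n : ℤ) + 1)) (-t + (n : ℂ) + 1 / 2)) :=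
    (hentire _).comp ((differentiable_id.neg.add_const _).add_const _)
  have T3 : Filter.Tendsto (fun s : ℂ =>
      (𝒵 (-(2 * (n : ℤ) + 1)) (-(-s) + (n : ℂ) + 1 / 2) /
        𝒵 (-(2 * (n : ℤ) + 1)) (-s + (n : ℂ) + 1 / 2)) ^ 2) (nhdsWithin 0 S) (nhds 1) :=
    aux_ratio _ hd2 S fun s hs h => hs.1 (by rw [eq2 s, h, mul_zero])
  have T3' : Filter.Tendsto (fun s : ℂ =>
      (𝒵 (-(2 * (n : ℤ) + 1)) (s + (n : ℂ) + 1 / 2) /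
        𝒵 (-(2 * (n : ℤ) + 1)) (-s + (n : ℂ) + 1 / 2)) ^ 2) (nhdsWithin 0 S) (nhds 1) :=
    T3.congr fun s => by rw [neg_neg]
  have hcont : Continuous (fun s : ℂ =>
      ((Complex.exp (Complex.I * (Real.pi : ℂ) * ((η (2 * (n : ℤ) - 1) : ℝ) : ℂ)) *
        Complex.exp (((V : ℂ) / (Real.pi : ℂ)) *
          ((s - (n : ℂ) - 1 / 2) ^ 3 / 3 -
            ((2 * (n : ℤ) - 1 : ℤ) : ℂ) ^ 2 * (s - (n : ℂ) - 1 / 2) / 4))) /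
       (Complex.exp (Complex.I * (Real.pi : ℂ) * ((η (2 * (n : ℤ) + 1) : ℝ) : ℂ)) *
        Complex.exp (((V : ℂ) / (Real.pi : ℂ)) *
          ((s - (n : ℂ) + 1 / 2) ^ 3 / 3 -
            ((2 * (n : ℤ) + 1 : ℤ) : ℂ) ^ 2 * (s - (n : ℂ) + 1 / 2) / 4)))) ^ 2) := by
    apply Continuous.pow
    apply Continuous.div
    · fun_prop
    · fun_prop
    · intro x
      exact mul_ne_zero (Complex.exp_ne_zero _) (Complex.exp_ne_zero _)
  have T1 := hcont.tendsto' 0 (Complex.exp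
        (-(2 / (Real.pi : ℂ)) * (2 * (n : ℂ) ^ 2 - 1 / 6) * (V : ℂ) -
          2 * (Real.pi : ℂ) * Complex.I *
            ((η (2 * (n : ℤ) + 1) : ℂ) - (η (2 * (n : ℤ) - 1) : ℂ)))) (by
    show ((Complex.exp _ * Complex.exp _) / (Complex.exp _ * Complex.exp _)) ^ 2 = _
    rw [aux_exp_ratio_sq]
    congr 1
    push_cast
    field_simp
    ring)
  have Tfinal := ((T1.mono_left nhdsWithin_le_nhds).mul T2).mul T3'
  rw [mul_one, mul_one] at Tfinal
  refine Tfinal.congr fun s => ?_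
  rw [eq1 s, eq2 s]
  ring
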